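/- Let η_i(a₂) = (z₁,…,z_i, a₂, a₂t, …, a₂t^{n−i−1}). Then f_i(a₁,a₂;t; η_i(a₂)) = ∏_{l=1}^{i} (z_l − a₂t^{n−i})/(a₁t^{l−1} − a₂t^{n−i}), and f_i(a₁,a₂;t; η_j(a₂)) = 0 whenever i > j, where η_j(a₂) = (z₁,…,z_j, a₂, a₂t, …, a₂t^{n−j−1}). -/

import Mathlib

open scoped BigOperators

/-- The k-th element (0-indexed) of a finite set of naturals, listed increasingly. -/
def sortedEl (I : Finset ℕ) (k : ℕ) : ℕ := (I.sort (· ≤ ·)).getD k 0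

lemma sort_insert_max (s : Finset ℕ) (a : ℕ) (h : ∀ b ∈ s, b < a) :
    (insert a s).sort (· ≤ ·) = s.sort (· ≤ ·) ++ [a] := by
  have hna : a ∉ s := fun ha => lt_irrefl a (h a ha)
  refine (fun hp h1 h2 => List.Perm.eq_of_pairwise' (r := (· ≤ ·)) h1 h2 hp) ?_ ?_ ?_
  · apply Multiset.coe_eq_coe.mp
    rw [Finset.sort_eq, Finset.insert_val_of_notMem hna]
    rw [show ((s.sort (· ≤ ·) ++ [a] : List ℕ) : Multiset ℕ)
        = ↑(s.sort (· ≤ ·)) + ↑([a] : List ℕ) from rfl]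
    rw [Finset.sort_eq, Multiset.coe_singleton, add_comm, Multiset.singleton_add]
  · exact Finset.pairwise_sort ..
  · refine List.pairwise_append.mpr ⟨Finset.pairwise_sort .., List.pairwise_singleton _ a, ?_⟩
    intro x hx y hy
    simp at hy; subst hy
    exact le_of_lt (h x ((Finset.mem_sort _).mp hx))

lemma sortedEl_insert_lt {s : Finset ℕ} {a : ℕ} (h : ∀ b ∈ s, b < a) {k : ℕ} (hk : k < s.card) :
    sortedEl (insert a s) k = sortedEl s k := by
  unfold sortedEl
  rw [sort_insert_max s a h, List.getD_append _ _ _ _ (by rwa [Finset.length_sort])]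

lemma sortedEl_insert_self {s : Finset ℕ} {a : ℕ} (h : ∀ b ∈ s, b < a) :
    sortedEl (insert a s) s.card = a := by
  unfold sortedEl
  rw [sort_insert_max s a h, List.getD_append_right _ _ _ _ (by rw [Finset.length_sort])]
  simp

lemma sortedEl_mem {I : Finset ℕ} {k : ℕ} (hk : k < I.card) : sortedEl I k ∈ I := by
  unfold sortedEl
  have hl : k < (I.sort (· ≤ ·)).length := by rwa [Finset.length_sort]
  rw [List.getD_eq_getElem _ _ hl]
  exact (Finset.mem_sort _).mp (List.getElem_mem hl)

lemma card_Icc1 (n : ℕ) : (Finset.Icc 1 n).card = n := by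
  rw [Nat.card_Icc]; omega

lemma Icc1_succ (n : ℕ) : Finset.Icc 1 (n+1) = insert (n+1) (Finset.Icc 1 n) := by
  ext x; simp [Finset.mem_Icc, Finset.mem_insert]; omega

lemma sortedEl_Icc {n k : ℕ} (hk : k < n) : sortedEl (Finset.Icc 1 n) k = k + 1 := by
  induction n with
  | zero => omega
  | succ m ih =>
    rw [Icc1_succ]
    have hmax : ∀ b ∈ Finset.Icc 1 m, b < m + 1 := by intro b hb; simp [Finset.mem_Icc] at hb; omega
    rcases Nat.lt_or_ge k m with h | h
    · rw [sortedEl_insert_lt hmax (by rwa [card_Icc1])]; exact ih h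
    · have : k = m := by omega
      subst this
      have := sortedEl_insert_self hmax
      rwa [card_Icc1] at this

/-- The Lagrange interpolation polynomial of type A:
f_r(a₁,a₂;t;z) = ∑_{I⊆{1,…,n},|I|=r} ∏_{k=1}^{r}(z_{i_k}−a₂t^{i_k−k})/(a₁t^{k−1}−a₂t^{i_k−k})
  ∏_{l=1}^{n−r}(z_{j_l}−a₁t^{j_l−l})/(a₂t^{l−1}−a₁t^{j_l−l}),
where I = {i₁<⋯<i_r} and {1,…,n}∖I = {j₁<⋯<j_{n−r}}; z is indexed by 1,…,n. -/
noncomputable def lagrangeF (a₁ a₂ t : ℂ) (n r : ℕ) (z : ℕ → ℂ) : ℂ :=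
  ∑ I ∈ Finset.powersetCard r (Finset.Icc 1 n),
    (∏ k ∈ Finset.range r,
        (z (sortedEl I k) - a₂ * t ^ (sortedEl I k - (k + 1))) /
          (a₁ * t ^ k - a₂ * t ^ (sortedEl I k - (k + 1)))) *
      ∏ l ∈ Finset.range (n - r),
        (z (sortedEl ((Finset.Icc 1 n) \ I) l) -
            a₁ * t ^ (sortedEl ((Finset.Icc 1 n) \ I) l - (l + 1))) /
          (a₂ * t ^ l - a₁ * t ^ (sortedEl ((Finset.Icc 1 n) \ I) l - (l + 1)))


lemma lagrangeF_congr (a₁ a₂ t : ℂ) (n r : ℕ) {z z' : ℕ → ℂ}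
    (h : ∀ k, 1 ≤ k → k ≤ n → z k = z' k) :
    lagrangeF a₁ a₂ t n r z = lagrangeF a₁ a₂ t n r z' := by
  unfold lagrangeF
  refine Finset.sum_congr rfl fun I hI => ?_
  rw [Finset.mem_powersetCard] at hI
  obtain ⟨hsub, hcard⟩ := hI
  congr 1
  · refine Finset.prod_congr rfl fun k hk => ?_
    rw [Finset.mem_range] at hk
    have hmem : sortedEl I k ∈ Finset.Icc 1 n := hsub (sortedEl_mem (by omega))
    rw [Finset.mem_Icc] at hmem
    rw [h _ hmem.1 hmem.2]
  · refine Finset.prod_congr rfl fun l hl => ?_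
    rw [Finset.mem_range] at hl
    have hcardC : (Finset.Icc 1 n \ I).card = n - r := by
      rw [Finset.card_sdiff_of_subset hsub, card_Icc1, hcard]
    have hmem : sortedEl (Finset.Icc 1 n \ I) l ∈ Finset.Icc 1 n :=
      (Finset.mem_sdiff.mp (sortedEl_mem (by omega))).1
    rw [Finset.mem_Icc] at hmem
    rw [h _ hmem.1 hmem.2]

lemma lagrangeF_of_gt (a₁ a₂ t : ℂ) {n r : ℕ} (h : n < r) (z : ℕ → ℂ) :
    lagrangeF a₁ a₂ t n r z = 0 := by
  unfold lagrangeF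
  rw [Finset.powersetCard_eq_empty.mpr (by rw [card_Icc1]; exact h), Finset.sum_empty]

lemma lagrangeF_zero_rec (a₁ a₂ t : ℂ) (n : ℕ) (z : ℕ → ℂ) :
    lagrangeF a₁ a₂ t (n+1) 0 z =
      ((z (n+1) - a₁ * t ^ 0) / (a₂ * t ^ n - a₁ * t ^ 0)) * lagrangeF a₁ a₂ t n 0 z := by
  unfold lagrangeF
  simp only [Finset.powersetCard_zero, Finset.sum_singleton, Finset.sdiff_empty,
    Finset.prod_range_zero, one_mul, Nat.sub_zero]
  have hmax : ∀ b ∈ Finset.Icc 1 n, b < n + 1 := by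
    intro b hb; rw [Finset.mem_Icc] at hb; omega
  rw [Icc1_succ, Finset.prod_range_succ]
  have h1 : sortedEl (insert (n+1) (Finset.Icc 1 n)) n = n + 1 := by
    have := sortedEl_insert_self hmax
    rwa [card_Icc1] at this
  rw [h1]
  rw [show n + 1 - (n + 1) = 0 from by omega]
  have h2 : ∀ l ∈ Finset.range n,
      (z (sortedEl (insert (n+1) (Finset.Icc 1 n)) l) -
          a₁ * t ^ (sortedEl (insert (n+1) (Finset.Icc 1 n)) l - (l + 1))) /
        (a₂ * t ^ l - a₁ * t ^ (sortedEl (insert (n+1) (Finset.Icc 1 n)) l - (l + 1))) =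
      (z (sortedEl (Finset.Icc 1 n) l) - a₁ * t ^ (sortedEl (Finset.Icc 1 n) l - (l + 1))) /
        (a₂ * t ^ l - a₁ * t ^ (sortedEl (Finset.Icc 1 n) l - (l + 1))) := by
    intro l hl
    rw [Finset.mem_range] at hl
    rw [sortedEl_insert_lt hmax (by rw [card_Icc1]; exact hl)]
  rw [Finset.prod_congr rfl h2]
  ring

lemma lagrangeF_rec (a₁ a₂ t : ℂ) (n r : ℕ) (z : ℕ → ℂ) :
    lagrangeF a₁ a₂ t (n+1) (r+1) z =
      ((z (n+1) - a₁ * t ^ (r+1)) / (a₂ * t ^ (n-r-1) - a₁ * t ^ (r+1))) *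
          lagrangeF a₁ a₂ t n (r+1) z
      + ((z (n+1) - a₂ * t ^ (n-r)) / (a₁ * t ^ r - a₂ * t ^ (n-r))) *
          lagrangeF a₁ a₂ t n r z := by
  have hnotmem : (n+1) ∉ Finset.Icc 1 n := by simp
  have hmaxIcc : ∀ b ∈ Finset.Icc 1 n, b < n + 1 := by
    intro b hb; rw [Finset.mem_Icc] at hb; omega
  unfold lagrangeF
  rw [Icc1_succ, Finset.powersetCard_succ_insert hnotmem]
  rw [Finset.sum_union]
  · rw [Finset.sum_image]
    · congr 1
      · -- terms with n+1 ∉ I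
        rw [Finset.mul_sum]
        refine Finset.sum_congr rfl fun I hI => ?_
        rw [Finset.mem_powersetCard] at hI
        obtain ⟨hsub, hcard⟩ := hI
        have hni : (n+1) ∉ I := fun hx => hnotmem (hsub hx)
        have hrn : r + 1 ≤ n := by
          have := Finset.card_le_card hsub
          rwa [hcard, card_Icc1] at this
        have hC : insert (n+1) (Finset.Icc 1 n) \ I = insert (n+1) (Finset.Icc 1 n \ I) := by
          ext x
          simp only [Finset.mem_sdiff, Finset.mem_insert]
          constructor
          · rintro ⟨(rfl | hx), hxI⟩
            · exact Or.inl rfl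
            · exact Or.inr ⟨hx, hxI⟩
          · rintro (rfl | ⟨hx, hxI⟩)
            · exact ⟨Or.inl rfl, hni⟩
            · exact ⟨Or.inr hx, hxI⟩
        have hmaxC : ∀ b ∈ Finset.Icc 1 n \ I, b < n + 1 := fun b hb =>
          hmaxIcc b (Finset.mem_sdiff.mp hb).1
        have hcardC : (Finset.Icc 1 n \ I).card = n - (r+1) := by
          rw [Finset.card_sdiff_of_subset hsub, card_Icc1, hcard]
        rw [hC]
        rw [show n + 1 - (r+1) = (n - (r+1)) + 1 from by omega]
        rw [Finset.prod_range_succ _ (n - (r+1))]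
        have hlast : sortedEl (insert (n+1) (Finset.Icc 1 n \ I)) (n - (r+1)) = n + 1 := by
          have := sortedEl_insert_self hmaxC
          rwa [hcardC] at this
        rw [hlast]
        have hrest : ∀ l ∈ Finset.range (n - (r+1)),
            (z (sortedEl (insert (n+1) (Finset.Icc 1 n \ I)) l) -
                a₁ * t ^ (sortedEl (insert (n+1) (Finset.Icc 1 n \ I)) l - (l + 1))) /
              (a₂ * t ^ l - a₁ * t ^ (sortedEl (insert (n+1) (Finset.Icc 1 n \ I)) l - (l + 1))) =
            (z (sortedEl (Finset.Icc 1 n \ I) l) -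
                a₁ * t ^ (sortedEl (Finset.Icc 1 n \ I) l - (l + 1))) /
              (a₂ * t ^ l - a₁ * t ^ (sortedEl (Finset.Icc 1 n \ I) l - (l + 1))) := by
          intro l hl
          rw [Finset.mem_range] at hl
          rw [sortedEl_insert_lt hmaxC (by omega)]
        rw [Finset.prod_congr rfl hrest]
        rw [show n + 1 - (n - (r+1) + 1) = r + 1 from by omega]
        rw [show n - (r+1) = n - r - 1 from by omega]
        ring
      · -- terms with n+1 ∈ I, i.e. I = insert (n+1) I₀
        rw [Finset.mul_sum]
        refine Finset.sum_congr rfl fun I hI => ?_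
        rw [Finset.mem_powersetCard] at hI
        obtain ⟨hsub, hcard⟩ := hI
        have hni : (n+1) ∉ I := fun hx => hnotmem (hsub hx)
        have hrn : r ≤ n := by
          have := Finset.card_le_card hsub
          rwa [hcard, card_Icc1] at this
        have hmaxI : ∀ b ∈ I, b < n + 1 := fun b hb => hmaxIcc b (hsub hb)
        have hCompl : insert (n+1) (Finset.Icc 1 n) \ insert (n+1) I = Finset.Icc 1 n \ I := by
          ext x
          simp only [Finset.mem_sdiff, Finset.mem_insert]
          constructor
          · rintro ⟨(rfl | hx), hni2⟩
            · exact absurd (Or.inl rfl) hni2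
            · exact ⟨hx, fun hxI => hni2 (Or.inr hxI)⟩
          · rintro ⟨hx, hxI⟩
            refine ⟨Or.inr hx, ?_⟩
            rintro (rfl | h')
            · exact hnotmem hx
            · exact hxI h'
        rw [hCompl]
        rw [Finset.prod_range_succ _ r]
        have hlast : sortedEl (insert (n+1) I) r = n + 1 := by
          have := sortedEl_insert_self hmaxI
          rwa [hcard] at this
        rw [hlast]
        have hrest : ∀ k ∈ Finset.range r,
            (z (sortedEl (insert (n+1) I) k) - a₂ * t ^ (sortedEl (insert (n+1) I) k - (k + 1))) /
              (a₁ * t ^ k - a₂ * t ^ (sortedEl (insert (n+1) I) k - (k + 1))) =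
            (z (sortedEl I k) - a₂ * t ^ (sortedEl I k - (k + 1))) /
              (a₁ * t ^ k - a₂ * t ^ (sortedEl I k - (k + 1))) := by
          intro k hk
          rw [Finset.mem_range] at hk
          rw [sortedEl_insert_lt hmaxI (by omega)]
        rw [Finset.prod_congr rfl hrest]
        rw [show n + 1 - (r + 1) = n - r from by omega]
        ring
    · -- injectivity of insert (n+1)
      intro I hI J hJ hIJ
      rw [Finset.mem_coe, Finset.mem_powersetCard] at hI hJ
      have hnI : (n+1) ∉ I := fun hx => hnotmem (hI.1 hx)
      have hnJ : (n+1) ∉ J := fun hx => hnotmem (hJ.1 hx)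
      have := congrArg (fun s => Finset.erase s (n+1)) hIJ
      simpa [Finset.erase_insert hnI, Finset.erase_insert hnJ] using this
  · -- disjointness
    rw [Finset.disjoint_left]
    intro I hI hI'
    rw [Finset.mem_powersetCard] at hI
    rw [Finset.mem_image] at hI'
    obtain ⟨J, _, rfl⟩ := hI'
    exact hnotmem (hI.1 (Finset.mem_insert_self _ _))

lemma lagrangeF_top (a₁ a₂ t : ℂ) (n : ℕ) (z : ℕ → ℂ) (hz : z (n+1) = a₂) :
    lagrangeF a₁ a₂ t (n+1) (n+1) z = 0 := by
  rw [lagrangeF_rec, lagrangeF_of_gt a₁ a₂ t (by omega) z, hz]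
  simp

lemma lagrangeF_diag (a₁ c t : ℂ) (r : ℕ) (w : ℕ → ℂ) :
    lagrangeF a₁ c t r r w = ∏ l ∈ Finset.Icc 1 r, (w l - c) / (a₁ * t ^ (l-1) - c) := by
  unfold lagrangeF
  have hps : Finset.powersetCard r (Finset.Icc 1 r) = {Finset.Icc 1 r} := by
    have := Finset.powersetCard_self (Finset.Icc 1 r)
    rwa [card_Icc1] at this
  rw [hps, Finset.sum_singleton, Finset.sdiff_self, Nat.sub_self, Finset.prod_range_zero,
    mul_one]
  have himg : Finset.Icc 1 r = (Finset.range r).image (· + 1) := by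
    ext x
    simp only [Finset.mem_Icc, Finset.mem_image, Finset.mem_range]
    constructor
    · intro h; exact ⟨x - 1, by omega, by omega⟩
    · rintro ⟨a, ha, rfl⟩; omega
  conv_rhs => rw [himg, Finset.prod_image (by intro a _ b _ h; simp only at h; omega)]
  refine Finset.prod_congr rfl fun k hk => ?_
  rw [Finset.mem_range] at hk
  rw [sortedEl_Icc hk]
  rw [show k + 1 - (k + 1) = 0 from by omega, show k + 1 - 1 = k from by omega]
  simp

set_option maxRecDepth 100000 in
set_option maxHeartbeats 2000000 in
lemma lagrangeF_star (a₁ t : ℂ) (j : ℕ) :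
    ∀ b : ℂ, (∀ k l : ℕ, a₁ * t ^ k ≠ b * t ^ l) →
    ∀ r : ℕ, ∀ z : ℕ → ℂ,
      lagrangeF a₁ b t (j+1) r (Function.update z (j+1) b) =
        lagrangeF a₁ (b * t) t j r z := by
  induction j with
  | zero =>
    intro b hb r z
    have hu : Function.update z 1 b 1 = b := Function.update_self 1 b z
    match r with
    | 0 =>
      rw [lagrangeF_zero_rec, hu]
      have h00 : ∀ (c : ℂ) (y : ℕ → ℂ), lagrangeF a₁ c t 0 0 y = 1 := by
        intro c y
        unfold lagrangeF
        simp
      rw [h00, h00]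
      simp only [mul_one, pow_zero]
      exact div_self (sub_ne_zero_of_ne (Ne.symm (by simpa using hb 0 0)))
    | 1 =>
      rw [lagrangeF_top a₁ b t 0 _ hu, lagrangeF_of_gt _ _ _ (by omega)]
    | (s+2) =>
      rw [lagrangeF_of_gt _ _ _ (by omega), lagrangeF_of_gt _ _ _ (by omega)]
  | succ j ih =>
    intro b hb r z
    have hbt : ∀ k l : ℕ, a₁ * t ^ k ≠ b * t * t ^ l := by
      intro k l h
      exact hb k (l+1) (by rw [h]; ring)
    have hba : ∀ k l : ℕ, b * t ^ l - a₁ * t ^ k ≠ 0 := fun k l =>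
      sub_ne_zero_of_ne (Ne.symm (hb k l))
    have hab : ∀ k l : ℕ, a₁ * t ^ k - b * t ^ l ≠ 0 := fun k l => sub_ne_zero_of_ne (hb k l)
    have hbta : ∀ k l : ℕ, b * t * t ^ l - a₁ * t ^ k ≠ 0 := fun k l =>
      sub_ne_zero_of_ne (Ne.symm (hbt k l))
    have habt : ∀ k l : ℕ, a₁ * t ^ k - b * t * t ^ l ≠ 0 := fun k l =>
      sub_ne_zero_of_ne (hbt k l)
    have hu : Function.update z (j+2) b (j+2) = b := Function.update_self _ b z
    have hcongr1 : ∀ r', lagrangeF a₁ b t (j+1) r' (Function.update z (j+2) b)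
        = lagrangeF a₁ b t (j+1) r' z := by
      intro r'
      apply lagrangeF_congr
      intro k _ hk2
      exact Function.update_of_ne (show k ≠ j+2 by omega) b z
    have hz' : Function.update z (j+1) b (j+1) = b := Function.update_self _ b z
    have hcongr2 : ∀ r', lagrangeF a₁ b t j r' (Function.update z (j+1) b)
        = lagrangeF a₁ b t j r' z := by
      intro r'
      apply lagrangeF_congr
      intro k _ hk2
      exact Function.update_of_ne (show k ≠ j+1 by omega) b z
    match r with
    | 0 =>
      rw [lagrangeF_zero_rec, hu, hcongr1, lagrangeF_zero_rec]
      rw [lagrangeF_zero_rec]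
      rw [← ih b hb 0 z, lagrangeF_zero_rec, hz', hcongr2]
      rw [show b * t * t ^ j = b * t ^ (j+1) from by rw [pow_succ]; ring]
      ring
    | (s+1) =>
      rcases Nat.lt_or_ge (j+1) s with hs | hs
      · -- s ≥ j+2 : both sides zero
        rw [lagrangeF_of_gt _ _ _ (by omega), lagrangeF_of_gt _ _ _ (by omega)]
      rcases Nat.eq_or_lt_of_le hs with rfl | hs2
      · -- s = j+1 : top
        rw [lagrangeF_top a₁ b t (j+1) _ hu, lagrangeF_of_gt _ _ _ (by omega)]
      have hsj : s ≤ j := by omega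
      -- main case
      rw [lagrangeF_rec a₁ b t (j+1) s, hu, hcongr1, hcongr1]
      rw [lagrangeF_rec a₁ b t j s z]
      rw [lagrangeF_rec a₁ (b*t) t j s z]
      rw [← ih b hb (s+1) z, lagrangeF_rec a₁ b t j s, hz', hcongr2, hcongr2]
      match s with
      | 0 =>
        rw [lagrangeF_zero_rec a₁ b t j z]
        rw [← ih b hb 0 z, lagrangeF_zero_rec a₁ b t j, hz', hcongr2]
        match j with
        | 0 =>
          rw [lagrangeF_of_gt _ _ _ (by omega) z]
          have n1 := hba (0+1) (0+1-0-1)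
          have n2 := hba (0+1) (0-0-1)
          have n3 := hab 0 (0-0)
          have n4 := hab 0 (0+1-0)
          have n5 := hba 0 0
          have n6 := hbta (0+1) (0-0-1)
          have n7 := habt 0 (0-0)
          norm_num at n1 n2 n3 n4 n5 n6 n7 ⊢
          field_simp
          ring
        | (m+1) =>
          rw [show m+1+1-0-1 = m+1 from by omega, show m+1-0-1 = m from by omega,
            show m+1+1-0 = m+2 from by omega, show m+1-0 = m+1 from by omega]
          have n1 := hba 1 (m+1)
          have n2 := hba 1 m
          have n3 := hab 0 (m+1)
          have n4 := hab 0 (m+2)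
          have n5 := hba 0 (m+1)
          have n6 := hbta 1 m
          have n7 := habt 0 (m+1)
          have n8 := hba 0 0
          simp only [pow_zero, pow_one, mul_one, zero_add] at n1 n2 n3 n4 n5 n6 n7 n8 ⊢
          have n9 : b * t ^ m - a₁ ≠ 0 := by simpa using hba 0 m
          have ht0 : t ≠ 0 := fun h => hb 1 1 (by rw [h]; ring)
          field_simp
          ring
      | (q+1) =>
        rw [lagrangeF_rec a₁ b t j q z]
        rw [← ih b hb (q+1) z, lagrangeF_rec a₁ b t j q, hz', hcongr2, hcongr2]
        rcases Nat.eq_or_lt_of_le hsj with rfl | hsj2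
        · -- s = j
          rw [lagrangeF_of_gt a₁ b t (show (q+1) < (q+1)+1 by omega) z]
          rw [show q+1+1-(q+1)-1 = 0 from by omega, show q+1-(q+1)-1 = 0 from by omega,
            show q+1-(q+1) = 0 from by omega, show q+1+1-(q+1) = 1 from by omega,
            show q+1-q-1 = 0 from by omega, show q+1-q = 1 from by omega]
          have n1 := hba (q+1+1) 0
          have n2 := hab (q+1) 0
          have n3 := hab (q+1) 1
          have n4 := hba (q+1) 0
          have n5 := hab q 1
          have n6 := hbta (q+1+1) 0
          have n7 := habt (q+1) 0
          have n8 := habt q 0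
          simp only [pow_zero, pow_one, mul_one] at n1 n2 n3 n4 n5 n6 n7 n8 ⊢
          have ht0 : t ≠ 0 := fun h => hb 1 1 (by rw [h]; ring)
          field_simp
          ring
        · -- s + 1 ≤ j
          obtain ⟨w, rfl⟩ : ∃ w, j = q + 1 + (w + 1) := ⟨j - q - 2, by omega⟩
          rw [show q+1+(w+1)+1-(q+1)-1 = w+1 from by omega,
            show q+1+(w+1)-(q+1)-1 = w from by omega,
            show q+1+(w+1)-(q+1) = w+1 from by omega,
            show q+1+(w+1)+1-(q+1) = w+2 from by omega,
            show q+1+(w+1)-q-1 = w+1 from by omega,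
            show q+1+(w+1)-q = w+2 from by omega]
          have n1 := hba (q+1+1) (w+1)
          have n2 := hba (q+1+1) w
          have n3 := hab (q+1) (w+1)
          have n4 := hab (q+1) (w+2)
          have n5 := hba (q+1) (w+1)
          have n6 := hab q (w+1)
          have n7 := hab q (w+2)
          have n8 := hbta (q+1+1) w
          have n9 := habt (q+1) (w+1)
          have n10 := habt q (w+1)
          have ht0 : t ≠ 0 := fun h => hb 1 1 (by rw [h]; ring)
          rw [show b * t * t ^ w = b * t ^ (w+1) by ring, show b * t * t ^ (w + 1) = b * t ^ (w+2) by ring]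
          field_simp
          ring

/-- The point η_j(a₂) = (w₁,…,w_j, a₂, a₂t, …, a₂t^{n−j−1}), indexed by 1,…,n. -/
noncomputable def etaNode (w : ℕ → ℂ) (a₂ t : ℂ) (j : ℕ) : ℕ → ℂ :=
  fun k => if k ≤ j then w k else a₂ * t ^ (k - j - 1)

lemma lagrangeF_eta (a₁ a₂ t : ℂ) (hgen : ∀ k l : ℕ, a₁ * t ^ k ≠ a₂ * t ^ l) :
    ∀ n j r : ℕ, j ≤ n → ∀ w : ℕ → ℂ,
      lagrangeF a₁ a₂ t n r (etaNode w a₂ t j) =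
        lagrangeF a₁ (a₂ * t ^ (n - j)) t j r w := by
  intro n
  induction n with
  | zero =>
    intro j r hj w
    have hj0 : j = 0 := by omega
    subst hj0
    rw [Nat.sub_self, pow_zero, mul_one]
    exact lagrangeF_congr _ _ _ _ _ (fun k hk1 hk2 => by omega)
  | succ m ih =>
    intro j r hj w
    rcases Nat.eq_or_lt_of_le hj with rfl | hj2
    · rw [Nat.sub_self, pow_zero, mul_one]
      refine lagrangeF_congr _ _ _ _ _ (fun k hk1 hk2 => ?_)
      unfold etaNode
      rw [if_pos hk2]
    · have hjm : j ≤ m := by omega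
      have hb : ∀ k l : ℕ, a₁ * t ^ k ≠ a₂ * t ^ (m - j) * t ^ l := by
        intro k l h
        exact hgen k (m - j + l) (by rw [h, pow_add]; ring)
      have heta : etaNode w a₂ t j (m+1) = a₂ * t ^ (m - j) := by
        unfold etaNode
        rw [if_neg (by omega), show m+1-j-1 = m-j from by omega]
      have hupd : ∀ r', lagrangeF a₁ (a₂ * t ^ (m-j)) t j r'
          (Function.update w (j+1) (a₂ * t ^ (m-j))) =
          lagrangeF a₁ (a₂ * t ^ (m-j)) t j r' w := fun r' =>
        lagrangeF_congr _ _ _ _ _ (fun k hk1 hk2 =>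
          Function.update_of_ne (show k ≠ j+1 by omega) _ w)
      have hpow : a₂ * t ^ (m+1-j) = a₂ * t ^ (m-j) * t := by
        rw [show m+1-j = (m-j)+1 from by omega, pow_succ]; ring
      cases r with
      | zero =>
        rw [lagrangeF_zero_rec, heta, ih j 0 hjm w]
        rw [hpow, ← lagrangeF_star a₁ t j (a₂ * t ^ (m-j)) hb 0 w]
        rw [lagrangeF_zero_rec, Function.update_self, hupd]
        rw [show a₂ * t ^ (m-j) * t ^ j = a₂ * t ^ m from by
          rw [mul_assoc, ← pow_add, show m-j+j = m from by omega]]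
      | succ s =>
        rw [lagrangeF_rec a₁ a₂ t m s, heta, ih j (s+1) hjm w, ih j s hjm w]
        rw [hpow, ← lagrangeF_star a₁ t j (a₂ * t ^ (m-j)) hb (s+1) w]
        rw [lagrangeF_rec a₁ (a₂ * t ^ (m-j)) t j s, Function.update_self, hupd, hupd]
        rcases lt_trichotomy s j with hsj | rfl | hsj
        · -- s + 1 ≤ j
          rw [show a₂ * t ^ (m-j) * t ^ (j-s-1) = a₂ * t ^ (m-s-1) from by
            rw [mul_assoc, ← pow_add, show m-j+(j-s-1) = m-s-1 from by omega]]
          rw [show a₂ * t ^ (m-j) * t ^ (j-s) = a₂ * t ^ (m-s) from by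
            rw [mul_assoc, ← pow_add, show m-j+(j-s) = m-s from by omega]]
        · -- s = j
          rw [lagrangeF_of_gt _ _ _ (show s < s+1 by omega) w]
          simp [Nat.sub_self]
        · -- s > j
          rw [lagrangeF_of_gt _ _ _ (show j < s+1 by omega) w,
            lagrangeF_of_gt _ _ _ (show j < s by omega) w]
          simp

/-- Triangularity: f_i(a₁,a₂;t;η_i(a₂)) factorizes, and f_i(a₁,a₂;t;η_j(a₂)) = 0 for i > j. -/
theorem lagrange_eta (n i : ℕ) (hi : i ≤ n) (a₁ a₂ t : ℂ)
    (ha₁ : a₁ ≠ 0) (ha₂ : a₂ ≠ 0) (ht : t ≠ 0)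
    (hgen : ∀ k l : ℕ, a₁ * t ^ k ≠ a₂ * t ^ l) :
    (∀ w : ℕ → ℂ,
      lagrangeF a₁ a₂ t n i (etaNode w a₂ t i) =
        ∏ l ∈ Finset.Icc 1 i,
          (w l - a₂ * t ^ (n - i)) / (a₁ * t ^ (l - 1) - a₂ * t ^ (n - i))) ∧
    (∀ j : ℕ, j < i → ∀ w : ℕ → ℂ,
      lagrangeF a₁ a₂ t n i (etaNode w a₂ t j) = 0) := by
  constructor
  · intro w
    rw [lagrangeF_eta a₁ a₂ t hgen n i i hi w, lagrangeF_diag]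
  · intro j hj w
    rw [lagrangeF_eta a₁ a₂ t hgen n j i (by omega) w,
      lagrangeF_of_gt _ _ _ (by omega)]
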